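/- (Lemma 1, one-step feasibility.) Let τ > 0, ε ≥ 0, 0 ≤ η < 1 with τε ≤ 1, speed limits v_min ≤ v_max, acceleration limits a_min < 0 ≤ a_max with ε·v_min − η·a_min < (1 − η)·a_max and ε·v_max − η·a_max > (1 − η)·a_min, spacing parameters δ2 = 1/2 and δ1 ≥ 1 with τ(δ1 + 1)·(ε·v_min − a_min − η·(a_max − a_min)) ≥ v_max − v_min and ε·v_min − a_min − η·(a_max − a_min) > 0. Suppose the follower state is feasible: v_min ≤ v ≤ v_max, a_min ≤ u_prev ≤ a_max, and the safe-distance slack g ≥ 0; also v_min ≤ v₀ ≤ v_max and v_min ≤ v₀⁺ ≤ v_max for the leader's current and next-step speeds. Then max(a_min, a_lo) ≤ min(a_max, a_hi, ā_d), and every control input u with max(a_min, a_lo) ≤ u ≤ min(a_max, a_hi, ā_d) yields a feasible next state: a_min ≤ u ≤ a_max, v_min ≤ v⁺ ≤ v_max, and g⁺ ≥ 0, where ŭ = (1 − η)u − εv + η·u_prev, v⁺ = v + τŭ, and g⁺ = g + τ(v₀⁺ − v) − τ²(δ1 + 1)·ŭ. -/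
import Mathlib
set_option maxHeartbeats 1000000


/-- Lemma 1, one-step feasibility: from a feasible state the
feasible control interval `[max(a_min, a_lo), min(a_max, a_hi, ā_d)]` is
nonempty, and every control input in it yields a feasible next state. -/
theorem one_step_feasibility
    (τ ε η vmin vmax amin amax δ1 g v₀ v₀' v uprev : ℝ)
    (hτ : 0 < τ) (hε : 0 ≤ ε) (hη0 : 0 ≤ η) (hη1 : η < 1)
    (hτε : τ * ε ≤ 1) (hv : vmin ≤ vmax)
    (hamin : amin < 0) (hamax : 0 ≤ amax)
    (hcond1 : ε * vmin - η * amin < (1 - η) * amax)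
    (hcond2 : ε * vmax - η * amax > (1 - η) * amin)
    (hδ1 : 1 ≤ δ1)
    (hδ1big : τ * (δ1 + 1) * (ε * vmin - amin - η * (amax - amin)) ≥
      vmax - vmin)
    (hpos : 0 < ε * vmin - amin - η * (amax - amin))
    (hvlb : vmin ≤ v) (hvub : v ≤ vmax)
    (huprevlb : amin ≤ uprev) (huprevub : uprev ≤ amax)
    (hg : 0 ≤ g)
    (hv₀lb : vmin ≤ v₀) (hv₀ub : v₀ ≤ vmax)
    (hv₀'lb : vmin ≤ v₀') (hv₀'ub : v₀' ≤ vmax) :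
    max amin ((vmin - (1 - τ * ε) * v - τ * η * uprev) / (τ * (1 - η))) ≤
      min amax
        (min ((vmax - (1 - τ * ε) * v - τ * η * uprev) / (τ * (1 - η)))
          ((ε * v - η * uprev + (g + τ * (v₀' - v)) / (τ ^ 2 * (δ1 + 1))) /
            (1 - η))) ∧
    ∀ u : ℝ,
      max amin ((vmin - (1 - τ * ε) * v - τ * η * uprev) / (τ * (1 - η))) ≤
          u →
      u ≤ min amax
          (min ((vmax - (1 - τ * ε) * v - τ * η * uprev) / (τ * (1 - η)))
            ((ε * v - η * uprev + (g + τ * (v₀' - v)) / (τ ^ 2 * (δ1 + 1))) /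
              (1 - η))) →
      amin ≤ u ∧ u ≤ amax ∧
      vmin ≤ v + τ * ((1 - η) * u - ε * v + η * uprev) ∧
      v + τ * ((1 - η) * u - ε * v + η * uprev) ≤ vmax ∧
      0 ≤ g + τ * (v₀' - v) -
          τ ^ 2 * (δ1 + 1) * ((1 - η) * u - ε * v + η * uprev) := by
  have h1m : (0:ℝ) < 1 - η := by linarith
  have hA : (0:ℝ) < τ * (1 - η) := by positivity
  have hT2 : (0:ℝ) < τ ^ 2 * (δ1 + 1) := by positivity
  set D : ℝ := (g + τ * (v₀' - v)) / (τ ^ 2 * (δ1 + 1)) with hDdef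
  -- lower bounds on D
  have hD1 : vmin - v ≤ τ * D := by
    rw [hDdef, mul_div_assoc', le_div_iff₀ hT2]
    nlinarith [mul_nonneg hτ.le hg, mul_le_mul_of_nonneg_left hv₀'lb hτ.le,
      mul_nonneg (mul_nonneg hτ.le hτ.le) (by linarith : (0:ℝ) ≤ δ1 - 1),
      mul_nonneg (mul_nonneg (mul_nonneg hτ.le hτ.le)
        (by linarith : (0:ℝ) ≤ δ1)) (sub_nonneg.2 hvlb)]
  have hD2 : -(ε * vmin - amin - η * (amax - amin)) ≤ D := by
    rw [hDdef, le_div_iff₀ hT2]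
    nlinarith [mul_le_mul_of_nonneg_left hδ1big hτ.le]
  -- the six interval inequalities
  have h_amin_ahi : amin ≤ (vmax - (1 - τ * ε) * v - τ * η * uprev) / (τ * (1 - η)) := by
    rw [le_div_iff₀ hA]
    nlinarith [mul_le_mul_of_nonneg_left huprevub (mul_nonneg hτ.le hη0),
      mul_le_mul_of_nonneg_left hvub (by nlinarith : (0:ℝ) ≤ 1 - τ * ε),
      mul_le_mul_of_nonneg_left (le_of_lt hcond2) hτ.le]
  have h_amin_ad : amin ≤ (ε * v - η * uprev + D) / (1 - η) := by
    rw [le_div_iff₀ h1m]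
    nlinarith [hD2, mul_le_mul_of_nonneg_left hvlb hε,
      mul_le_mul_of_nonneg_left huprevub hη0]
  have h_alo_amax : (vmin - (1 - τ * ε) * v - τ * η * uprev) / (τ * (1 - η)) ≤ amax := by
    rw [div_le_iff₀ hA]
    nlinarith [mul_le_mul_of_nonneg_left huprevlb (mul_nonneg hτ.le hη0),
      mul_le_mul_of_nonneg_left hvlb (by nlinarith : (0:ℝ) ≤ 1 - τ * ε),
      mul_le_mul_of_nonneg_left (le_of_lt hcond1) hτ.le]
  have h_alo_ahi : (vmin - (1 - τ * ε) * v - τ * η * uprev) / (τ * (1 - η)) ≤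
      (vmax - (1 - τ * ε) * v - τ * η * uprev) / (τ * (1 - η)) := by
    exact (div_le_div_iff_of_pos_right hA).2 (by linarith)
  have h_alo_ad : (vmin - (1 - τ * ε) * v - τ * η * uprev) / (τ * (1 - η)) ≤
      (ε * v - η * uprev + D) / (1 - η) := by
    rw [div_le_div_iff₀ hA h1m]
    nlinarith [mul_le_mul_of_nonneg_left hD1 h1m.le]
  constructor
  · exact max_le (le_min (by linarith) (le_min h_amin_ahi h_amin_ad))
      (le_min h_alo_amax (le_min h_alo_ahi h_alo_ad))
  · intro u hlo hhi
    have h1 : amin ≤ u := le_trans (le_max_left _ _) hlo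
    have h2 : u ≤ amax := le_trans hhi (min_le_left _ _)
    have h3 : (vmin - (1 - τ * ε) * v - τ * η * uprev) / (τ * (1 - η)) ≤ u :=
      le_trans (le_max_right _ _) hlo
    have h4 : u ≤ (vmax - (1 - τ * ε) * v - τ * η * uprev) / (τ * (1 - η)) :=
      le_trans hhi (le_trans (min_le_right _ _) (min_le_left _ _))
    have h5 : u ≤ (ε * v - η * uprev + D) / (1 - η) :=
      le_trans hhi (le_trans (min_le_right _ _) (min_le_right _ _))
    rw [div_le_iff₀ hA] at h3
    rw [le_div_iff₀ hA] at h4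
    rw [le_div_iff₀ h1m] at h5
    refine ⟨h1, h2, by nlinarith, by nlinarith, ?_⟩
    have h6 : ((1 - η) * u - ε * v + η * uprev) * (τ ^ 2 * (δ1 + 1)) ≤
        g + τ * (v₀' - v) := by
      rw [← le_div_iff₀ hT2, ← hDdef]
      linarith
    linarith [h6]
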